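/- Let K be an abstract simplicial complex on the vertex set [m], and regard Δ(K) as a simplicial space with each Δ(K)_n discrete. Then for each n ≥ 0, the suspension of Δ(K)_n splits: there is a homotopy equivalence Σ(Δ(K)_n) → ⋁_{0 ≤ r ≤ n} ⋁_J Σ(ŝ_J(Δ(K)_{n−r})), where J ranges over all admissible sequences with |J| = r. -/

import Mathlib

universe u v

/-- An NDR pair `(Z, A)`, in the sense of May. -/
def IsNDRPair {Z : Type u} [TopologicalSpace Z] (A : Set Z) : Prop :=
  ∃ (u : C(Z, unitInterval)) (h : C(Z × unitInterval, Z)),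
    A = u ⁻¹' {0} ∧ (∀ z, h (z, 0) = z) ∧ (∀ a ∈ A, ∀ t, h (a, t) ∈ A) ∧
    ∀ z, u z < 1 → h (z, 1) ∈ A

/-- A strong NDR pair `(Z, A)`, in the sense of May. -/
def IsStrongNDRPair {Z : Type u} [TopologicalSpace Z] (A : Set Z) : Prop :=
  ∃ (u : C(Z, unitInterval)) (h : C(Z × unitInterval, Z)),
    A = u ⁻¹' {0} ∧ (∀ z, h (z, 0) = z) ∧ (∀ a ∈ A, ∀ t, h (a, t) ∈ A) ∧
    (∀ z, u z < 1 → h (z, 1) ∈ A) ∧ ∀ z t, u z < 1 → u (h (z, t)) < 1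

/-- A cofibration: a map having the homotopy extension property with respect to all spaces. -/
def IsCofibration {A X : Type u} [TopologicalSpace A] [TopologicalSpace X] (i : C(A, X)) : Prop :=
  ∀ (Z : Type u) [TopologicalSpace Z] (f : C(X, Z)) (H : C(A × unitInterval, Z)),
    (∀ a, H (a, 0) = f (i a)) →
    ∃ G : C(X × unitInterval, Z), (∀ x, G (x, 0) = f x) ∧ ∀ a t, G (i a, t) = H (a, t)

/-- `f` is a homotopy equivalence. -/
def IsHtpyEquiv {A : Type u} {B : Type v} [TopologicalSpace A] [TopologicalSpace B]
    (f : C(A, B)) : Prop :=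
  ∃ g : C(B, A), (g.comp f).Homotopic (ContinuousMap.id A) ∧
    (f.comp g).Homotopic (ContinuousMap.id B)

/-- A pointed topological space. -/
structure PSpace : Type (u + 1) where
  carrier : Type u
  top : TopologicalSpace carrier
  pt : carrier

attribute [instance] PSpace.top

/-- Points of `Z ⊕ *` which get identified when collapsing `A ⊆ Z`. -/
def collapseGood {Z : Type u} (A : Set Z) : Z ⊕ Unit → Prop :=
  Sum.elim (· ∈ A) fun _ => True

/-- The setoid on `Z ⊕ *` which identifies all points of `A` with the added point. -/
def collapseSetoid {Z : Type u} (A : Set Z) : Setoid (Z ⊕ Unit) where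
  r x y := x = y ∨ (collapseGood A x ∧ collapseGood A y)
  iseqv := by
    constructor
    · exact fun x => Or.inl rfl
    · rintro x y (rfl | ⟨h1, h2⟩)
      · exact Or.inl rfl
      · exact Or.inr ⟨h2, h1⟩
    · rintro x y z (rfl | ⟨h1, h2⟩) h
      · exact h
      · rcases h with rfl | ⟨h3, h4⟩
        · exact Or.inr ⟨h1, h2⟩
        · exact Or.inr ⟨h1, h4⟩

/-- The pointed quotient `Z/A`: the quotient of `Z ⊔ *` identifying all of `A ∪ {*}` to a
single point, which serves as basepoint.  (When `A = ∅` this is `Z` with a disjoint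
basepoint added.) -/
def Collapse {Z : Type u} [TopologicalSpace Z] (A : Set Z) : PSpace.{u} where
  carrier := Quotient (collapseSetoid A)
  top := instTopologicalSpaceQuotient
  pt := Quotient.mk _ (Sum.inr ())

/-- The canonical map `Z → Z/A`. -/
def Collapse.mk {Z : Type u} [TopologicalSpace Z] (A : Set Z) (z : Z) : (Collapse A).carrier :=
  Quotient.mk _ (Sum.inl z)

/-- `Z` with a disjoint basepoint added. -/
def plusP (Z : Type u) [TopologicalSpace Z] : PSpace.{u} := Collapse (∅ : Set Z)

/-- The reduced suspension of a pointed space. -/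
def Susp (P : PSpace.{u}) : PSpace.{u} :=
  Collapse {q : P.carrier × unitInterval | q.2 = 0 ∨ q.2 = 1 ∨ q.1 = P.pt}

/-- The canonical map `P × [0,1] → Σ P`. -/
def Susp.mk (P : PSpace.{u}) (z : P.carrier) (t : unitInterval) : (Susp P).carrier :=
  Collapse.mk _ (z, t)

/-- The wedge (one point union) of a family of pointed spaces. -/
def Wedge {ι : Type v} (P : ι → PSpace.{u}) : PSpace.{max u v} :=
  Collapse {x : Σ i, (P i).carrier | x.2 = (P x.1).pt}

/-- The canonical map from a summand into the wedge. -/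
def Wedge.mk {ι : Type v} (P : ι → PSpace.{u}) (i : ι) (z : (P i).carrier) :
    (Wedge P).carrier :=
  Collapse.mk _ ⟨i, z⟩

/-- `G` is the map of suspensions induced by the pointed map `g`. -/
def SuspExtends {P Q : PSpace.{u}} (g : P.carrier → Q.carrier)
    (G : (Susp P).carrier → (Susp Q).carrier) : Prop :=
  (∀ z t, G (Susp.mk P z t) = Susp.mk Q (g z) t) ∧ G (Susp P).pt = (Susp Q).pt

/-- `G` is the map of `j`-fold suspensions induced by the map `g`. -/
def SuspIterExtends : (j : ℕ) → (P Q : PSpace.{u}) → (P.carrier → Q.carrier) →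
    ((Susp^[j] P).carrier → (Susp^[j] Q).carrier) → Prop
  | 0, _, _, g, G => G = g
  | j + 1, P, Q, g, G =>
      ∃ g' : (Susp P).carrier → (Susp Q).carrier,
        SuspExtends g g' ∧ SuspIterExtends j (Susp P) (Susp Q) g' G

/-- `G` is the map of wedges induced by the family of maps `g i`. -/
def WedgeInduced {ι : Type v} (P Q : ι → PSpace.{u}) (g : ∀ i, (P i).carrier → (Q i).carrier)
    (G : (Wedge P).carrier → (Wedge Q).carrier) : Prop :=
  (∀ i z, G (Wedge.mk P i z) = Wedge.mk Q i (g i z)) ∧ G (Wedge P).pt = (Wedge Q).pt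

/-- `g` is the map of collapses induced by `f : Z → W`. -/
def CollapseInduced {Z : Type u} {W : Type v} [TopologicalSpace Z] [TopologicalSpace W]
    (A : Set Z) (B : Set W) (f : Z → W)
    (g : (Collapse A).carrier → (Collapse B).carrier) : Prop :=
  (∀ z, g (Collapse.mk A z) = Collapse.mk B (f z)) ∧ g (Collapse A).pt = (Collapse B).pt

/-- A simplicial space: a sequence of topological spaces with continuous face and
degeneracy maps satisfying the simplicial identities.  The maps `d n i : X (n+1) → X n`
and `s n i : X n → X (n+1)` carry ℕ-valued indices; only the values with
`i ≤ n + 1` (resp. `i ≤ n`) are meaningful, and the simplicial identities are imposed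
exactly in that range. -/
structure SimplicialSpace : Type (u + 1) where
  X : ℕ → Type u
  top : ∀ n, TopologicalSpace (X n)
  d : ∀ n, ℕ → X (n + 1) → X n
  s : ∀ n, ℕ → X n → X (n + 1)
  continuous_d : ∀ n i, Continuous (d n i)
  continuous_s : ∀ n i, Continuous (s n i)
  dd : ∀ n i j, i < j → j ≤ n + 2 → ∀ x, d n i (d (n + 1) j x) = d n (j - 1) (d (n + 1) i x)
  ss : ∀ n i j, i ≤ j → j ≤ n → ∀ x, s (n + 1) i (s n j x) = s (n + 1) (j + 1) (s n i x)
  ds_lt : ∀ n i j, i < j → j ≤ n + 1 → ∀ x,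
    d (n + 1) i (s (n + 1) j x) = s n (j - 1) (d n i x)
  ds_eq : ∀ n j, j ≤ n → ∀ x, d n j (s n j x) = x
  ds_eq' : ∀ n j, j ≤ n → ∀ x, d n (j + 1) (s n j x) = x
  ds_gt : ∀ n i j, j + 1 < i → i ≤ n + 2 → ∀ x,
    d (n + 1) i (s (n + 1) j x) = s n j (d n (i - 1) x)

attribute [instance] SimplicialSpace.top

namespace SimplicialSpace

/-- A morphism of simplicial spaces. -/
structure Hom (X Y : SimplicialSpace.{u}) : Type u where
  f : ∀ n, X.X n → Y.X n
  continuous_f : ∀ n, Continuous (f n)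
  comm_d : ∀ n i, i ≤ n + 1 → ∀ x, f n (X.d n i x) = Y.d n i (f (n + 1) x)
  comm_s : ∀ n i, i ≤ n → ∀ x, f (n + 1) (X.s n i x) = Y.s n i (f n x)

/-- For a sequence `I = (i_r, …, i_1)` (as the list `[i_r, …, i_1]`), the composite
degeneracy `s_I = s_{i_r} ∘ ⋯ ∘ s_{i_1} : X_m → X_{m + r}`. -/
def sComp (X : SimplicialSpace.{u}) : (I : List ℕ) → (m : ℕ) → X.X m → X.X (m + I.length)
  | [], _, y => y
  | i :: I', m, y => X.s (m + I'.length) i (sComp X I' m y)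

/-- For a sequence `I = (i_r, …, i_1)` (as the list `[i_r, …, i_1]`), the composite
face map `d_{χ(I)} = d_{i_1} ∘ d_{i_2} ∘ ⋯ ∘ d_{i_r} : X_{m+r} → X_m` (so `d_{i_r}` is
applied first). -/
def dComp (X : SimplicialSpace.{u}) : (I : List ℕ) → (m : ℕ) → X.X (m + I.length) → X.X m
  | [], _, x => x
  | i :: I', m, x => dComp X I' m (X.d (m + I'.length) i x)

/-- The sequence `I = (i_r, …, i_1)` consists of indices which are in range for the
composite degeneracy `s_I : X_m → X_{m+r}`. -/
def ValidSeq : List ℕ → ℕ → Prop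
  | [], _ => True
  | i :: I', m => i ≤ m + I'.length ∧ ValidSeq I' m

/-- The decreasing degeneracy filtration: `filtS X t n` is the subspace
`S^t(X_n) ⊆ X_n`, the union of the images of all `t`-fold composites of degeneracy
maps.  (`S^0(X_n) = X_n`.) -/
def filtS (X : SimplicialSpace.{u}) : (t : ℕ) → (n : ℕ) → Set (X.X n)
  | 0, _ => Set.univ
  | t + 1, n => {x | ∃ (m : ℕ) (hm : m + 1 = n) (i : ℕ), i ≤ m ∧
      ∃ y ∈ filtS X t m, cast (congrArg X.X hm) (X.s m i y) = x}

lemma filtS_succ_subset (X : SimplicialSpace.{u}) :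
    ∀ (t n : ℕ), X.filtS (t + 1) n ⊆ X.filtS t n := by
  intro t
  induction t with
  | zero => intro n x _; exact Set.mem_univ x
  | succ t ih =>
      rintro n x ⟨m, rfl, i, hi, y, hy, rfl⟩
      exact ⟨m, rfl, i, hi, y, ih m hy, rfl⟩

lemma filtS_antitone (X : SimplicialSpace.{u}) {t t' : ℕ} (h : t ≤ t') (n : ℕ) :
    X.filtS t' n ⊆ X.filtS t n := by
  induction h with
  | refl => exact fun x hx => hx
  | step _ ih => exact fun x hx => ih (X.filtS_succ_subset _ n hx)

end SimplicialSpace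
namespace SimplicialSpace

/-- The composite degeneracy `s_I`, regarded as a map `X_{n - r} → X_n` where `r = |I|`. -/
def sFromTo (X : SimplicialSpace.{u}) (I : List ℕ) (n : ℕ) (h : I.length ≤ n) :
    X.X (n - I.length) → X.X n :=
  fun y => cast (congrArg X.X (Nat.sub_add_cancel h)) (X.sComp I (n - I.length) y)

/-- The composite face map `d_{χ(I)}`, regarded as a map `X_n → X_{n - r}` where `r = |I|`. -/
def dFromTo (X : SimplicialSpace.{u}) (I : List ℕ) (n : ℕ) (h : I.length ≤ n) :
    X.X n → X.X (n - I.length) :=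
  fun x => X.dComp I (n - I.length) (cast (congrArg X.X (Nat.sub_add_cancel h).symm) x)

/-- The image `s_I(X_{n-r}) ⊆ X_n`. -/
def sImage (X : SimplicialSpace.{u}) (I : List ℕ) (n : ℕ) (h : I.length ≤ n) : Set (X.X n) :=
  Set.range (X.sFromTo I n h)

/-- The pointed space `ŝ_I(X_{n-r}) = s_I(X_{n-r}) / s_I S(X_{n-r})`. -/
def sHat (X : SimplicialSpace.{u}) (I : List ℕ) (n : ℕ) (h : I.length ≤ n) : PSpace.{u} :=
  Collapse {x : ↥(X.sImage I n h) |
    (x : X.X n) ∈ X.sFromTo I n h '' X.filtS 1 (n - I.length)}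

/-- The pointed filtration quotient `S^r(X_n)/S^{r+1}(X_n)`. -/
def filtQuot (X : SimplicialSpace.{u}) (n r : ℕ) : PSpace.{u} :=
  Collapse {x : ↥(X.filtS r n) | (x : X.X n) ∈ X.filtS (r + 1) n}

/-- `X` is simplicially NDR: each pair `(S^t(X_n), S^{t+1}(X_n))` is an NDR pair. -/
def SimpliciallyNDR (X : SimplicialSpace.{u}) : Prop :=
  ∀ n t, IsNDRPair {x : ↥(X.filtS t n) | (x : X.X n) ∈ X.filtS (t + 1) n}

/-- `X` is proper: each pair `(X_n, S(X_n))` is a strong NDR pair. -/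
def Proper (X : SimplicialSpace.{u}) : Prop := ∀ n, IsStrongNDRPair (X.filtS 1 n)

/-- `g` is the map `S^r(X_n)/S^{r+1}(X_n) → S^r(Y_n)/S^{r+1}(Y_n)` induced by the
morphism `f : X → Y` of simplicial spaces. -/
def FiltQuotInduced {X Y : SimplicialSpace.{u}} (f : X.Hom Y) (n r : ℕ)
    (g : (X.filtQuot n r).carrier → (Y.filtQuot n r).carrier) : Prop :=
  (∀ (x : X.X n) (hx : x ∈ X.filtS r n) (hfx : f.f n x ∈ Y.filtS r n),
      g (Collapse.mk _ ⟨x, hx⟩) = Collapse.mk _ ⟨f.f n x, hfx⟩) ∧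
  g (X.filtQuot n r).pt = (Y.filtQuot n r).pt

/-- `g` is the map `ŝ_I(X_{n-r}) → ŝ_I(Y_{n-r})` induced by the morphism `f : X → Y`. -/
def SHatInduced {X Y : SimplicialSpace.{u}} (f : X.Hom Y) (I : List ℕ) (n : ℕ)
    (h : I.length ≤ n)
    (g : (X.sHat I n h).carrier → (Y.sHat I n h).carrier) : Prop :=
  (∀ y : X.X (n - I.length),
      g (Collapse.mk _ ⟨X.sFromTo I n h y, Set.mem_range_self y⟩) =
        Collapse.mk _ ⟨Y.sFromTo I n h (f.f (n - I.length) y), Set.mem_range_self _⟩) ∧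
  g (X.sHat I n h).pt = (Y.sHat I n h).pt

end SimplicialSpace

/-- Admissible sequences `(j_r > j_{r-1} > ⋯ > j_1)` of length `r` with entries `< b`,
encoded as strictly decreasing lists. -/
def AdmSeq (r b : ℕ) : Type :=
  {J : List ℕ // J.length = r ∧ J.Pairwise (· > ·) ∧ ∀ i ∈ J, i < b}

/-- Strict lexicographic order on sequences of equal length (comparing from the left,
i.e. at the largest entries first): `I < J` iff they agree above position `p` and
`i_p < j_p`. -/
def SeqLexLT : List ℕ → List ℕ → Prop
  | _, [] => False
  | [], _ :: _ => False
  | i :: I', j :: J' => i < j ∨ (i = j ∧ SeqLexLT I' J')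
namespace SimplexCategory

/-- The topological simplex associated to `x : SimplexCategory` (as in the older Mathlib). -/
def toTopObj (x : SimplexCategory) : Set (Fin (x.len + 1) → NNReal) :=
  { f : Fin (x.len + 1) → NNReal | ∑ i, f i = 1 }

/-- A morphism in `SimplexCategory` induces a map on the associated topological spaces. -/
def toTopMap {x y : SimplexCategory} (f : x ⟶ y) (g : x.toTopObj) : y.toTopObj :=
  ⟨fun i => ∑ j ∈ Finset.univ.filter (f.toOrderHom · = i), g.1 j, by
    simp only [toTopObj, Set.mem_setOf_eq]
    rw [Finset.sum_fiberwise]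
    exact g.2⟩

end SimplexCategory

/-- The topological standard `n`-simplex. -/
abbrev TopSimplex (n : ℕ) : Type :=
  ↥(SimplexCategory.toTopObj (SimplexCategory.mk n))

namespace SimplicialSpace

/-- The disjoint union `⊔ₙ Xₙ × Δⁿ` from which the geometric realization is formed. -/
def RealPre (X : SimplicialSpace.{u}) : Type u :=
  Σ n : ℕ, X.X n × TopSimplex n

instance (X : SimplicialSpace.{u}) : TopologicalSpace (RealPre X) := by
  unfold RealPre; infer_instance

/-- The identifications defining the geometric realization: `(d_i x, u) ∼ (x, δ^i u)`
and `(s_i x, u) ∼ (x, σ^i u)`. -/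
inductive RealRel (X : SimplicialSpace.{u}) : RealPre X → RealPre X → Prop
  | face (n i : ℕ) (hi : i ≤ n + 1) (x : X.X (n + 1)) (u : TopSimplex n) :
      RealRel X ⟨n, (X.d n i x, u)⟩
        ⟨n + 1, (x, SimplexCategory.toTopMap (SimplexCategory.δ ⟨i, by omega⟩) u)⟩
  | degen (n i : ℕ) (hi : i ≤ n) (x : X.X n) (u : TopSimplex (n + 1)) :
      RealRel X ⟨n + 1, (X.s n i x, u)⟩
        ⟨n, (x, SimplexCategory.toTopMap (SimplexCategory.σ ⟨i, by omega⟩) u)⟩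

/-- The geometric realization `|X|` of a simplicial space. -/
def Realization (X : SimplicialSpace.{u}) : Type u := Quot (RealRel X)

instance (X : SimplicialSpace.{u}) : TopologicalSpace (Realization X) := by
  unfold Realization; infer_instance

/-- The subset of `|X|` of points represented by simplices of dimension `< j`
(so `FleBelow X 0 = ∅` and `FleBelow X (j+1) = F_j|X|`). -/
def FleBelow (X : SimplicialSpace.{u}) (j : ℕ) : Set (Realization X) :=
  {q | ∃ (n : ℕ), n < j ∧ ∃ (x : X.X n) (u : TopSimplex n), q = Quot.mk _ ⟨n, (x, u)⟩}

/-- The skeletal filtration `F_j|X|` of the geometric realization. -/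
def Fle (X : SimplicialSpace.{u}) (j : ℕ) : Set (Realization X) := FleBelow X (j + 1)

/-- The pointed filtration quotient `F_j|X| / F_{j-1}|X|` (for `j = 0` this is
`F_0|X|` with a disjoint basepoint added). -/
def realQuot (X : SimplicialSpace.{u}) (j : ℕ) : PSpace.{u} :=
  Collapse {q : ↥(Fle X j) | (q : Realization X) ∈ FleBelow X j}

/-- `g` is the map `|X| → |Y|` induced by a morphism `f : X → Y` of simplicial spaces. -/
def RealMapInduced {X Y : SimplicialSpace.{u}} (f : X.Hom Y)
    (g : Realization X → Realization Y) : Prop :=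
  ∀ (n : ℕ) (x : X.X n) (u : TopSimplex n),
    g (Quot.mk _ ⟨n, (x, u)⟩) = Quot.mk _ ⟨n, (f.f n x, u)⟩

/-- `g` is the map `F_j|X|/F_{j-1}|X| → F_j|Y|/F_{j-1}|Y|` induced by a morphism
`f : X → Y` of simplicial spaces. -/
def RealQuotInduced {X Y : SimplicialSpace.{u}} (f : X.Hom Y) (j : ℕ)
    (g : (realQuot X j).carrier → (realQuot Y j).carrier) : Prop :=
  ∃ g0 : Realization X → Realization Y, RealMapInduced f g0 ∧
    ∃ hg0 : ∀ q ∈ Fle X j, g0 q ∈ Fle Y j,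
      (∀ (q : Realization X) (hq : q ∈ Fle X j),
        g (Collapse.mk _ ⟨q, hq⟩) = Collapse.mk _ ⟨g0 q, hg0 q hq⟩) ∧
      g (realQuot X j).pt = (realQuot Y j).pt

end SimplicialSpace

/-- The mapping cone of a map `f : A → X`: the quotient of `X ⊔ (A × [0,1])` obtained by
identifying `(a, 0)` with `f a` and collapsing `A × {1}` to a point. -/
inductive ConeRel {A X : Type u} [TopologicalSpace A] [TopologicalSpace X] (f : A → X) :
    (X ⊕ (A × unitInterval)) → (X ⊕ (A × unitInterval)) → Prop
  | glue (a : A) : ConeRel f (Sum.inr (a, 0)) (Sum.inl (f a))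
  | tip (a b : A) : ConeRel f (Sum.inr (a, 1)) (Sum.inr (b, 1))

/-- The mapping cone of `f : A → X`. -/
def MappingCone {A X : Type u} [TopologicalSpace A] [TopologicalSpace X] (f : A → X) :
    Type u :=
  Quot (ConeRel f)

instance {A X : Type u} [TopologicalSpace A] [TopologicalSpace X] (f : A → X) :
    TopologicalSpace (MappingCone f) := by
  unfold MappingCone; infer_instance
/-- An abstract simplicial complex on the vertex set `{1, …, m}` (encoded as `Fin m`):
a collection of finite subsets closed under taking subsets. -/
structure AbsSimplicialComplex (m : ℕ) : Type where
  faces : Set (Finset (Fin m))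
  down_closed : ∀ σ ∈ faces, ∀ τ ⊆ σ, τ ∈ faces

/-- The `n`-simplices of the simplicial set `Δ(K)`: weakly order-preserving
`(n+1)`-tuples of vertices whose underlying set is a simplex of `K`. -/
def DeltaObj {m : ℕ} (K : AbsSimplicialComplex m) (n : ℕ) : Type :=
  {v : Fin (n + 1) → Fin m // Monotone v ∧ Finset.image v Finset.univ ∈ K.faces}

/-- The coface index map `δ_i : [n] → [n+1]` (with out-of-range `i` clamped). -/
def dIdx (n i : ℕ) (k : Fin (n + 1)) : Fin (n + 2) :=
  ⟨if k.1 < i then k.1 else k.1 + 1, by have := k.isLt; split_ifs <;> omega⟩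

/-- The codegeneracy index map `σ_i : [n+1] → [n]` (with out-of-range `i` clamped). -/
def sIdx (n i : ℕ) (k : Fin (n + 2)) : Fin (n + 1) :=
  ⟨if k.1 ≤ min i n then k.1 else k.1 - 1, by
    have := k.isLt; have := Nat.min_le_right i n; split_ifs <;> omega⟩

/-- The simplicial set `Δ(K)` associated to an abstract simplicial complex `K`,
regarded as a simplicial space in which every space is discrete. -/
def DeltaK {m : ℕ} (K : AbsSimplicialComplex m) : SimplicialSpace.{0} where
  X n := DeltaObj K n
  top _ := ⊥
  d n i v := ⟨fun k => v.1 (dIdx n i k),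
    fun a b hab => v.2.1 (by
      simp only [dIdx, Fin.mk_le_mk]
      have := Fin.le_def.mp hab
      split_ifs <;> omega),
    K.down_closed _ v.2.2 _ (Finset.image_subset_iff.mpr fun k _ =>
      Finset.mem_image_of_mem _ (Finset.mem_univ _))⟩
  s n i v := ⟨fun k => v.1 (sIdx n i k),
    fun a b hab => v.2.1 (by
      simp only [sIdx, Fin.mk_le_mk]
      have := Fin.le_def.mp hab
      split_ifs <;> omega),
    K.down_closed _ v.2.2 _ (Finset.image_subset_iff.mpr fun k _ =>
      Finset.mem_image_of_mem _ (Finset.mem_univ _))⟩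
  continuous_d _ _ := continuous_bot
  continuous_s _ _ := continuous_bot
  dd n i j hij hj x := by
    apply Subtype.ext; funext k
    refine congrArg x.1 (Fin.ext ?_)
    simp [dIdx]
    have := k.isLt
    split_ifs <;> omega
  ss n i j hij hj x := by
    apply Subtype.ext; funext k
    refine congrArg x.1 (Fin.ext ?_)
    simp [sIdx]
    have := k.isLt
    split_ifs <;> omega
  ds_lt n i j hij hj x := by
    apply Subtype.ext; funext k
    refine congrArg x.1 (Fin.ext ?_)
    simp [dIdx, sIdx]
    have := k.isLt
    split_ifs <;> omega
  ds_eq n j hj x := by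
    apply Subtype.ext; funext k
    refine congrArg x.1 (Fin.ext ?_)
    simp [dIdx, sIdx]
    have := k.isLt
    split_ifs <;> omega
  ds_eq' n j hj x := by
    apply Subtype.ext; funext k
    refine congrArg x.1 (Fin.ext ?_)
    simp [dIdx, sIdx]
    have := k.isLt
    split_ifs <;> omega
  ds_gt n i j hij hi x := by
    apply Subtype.ext; funext k
    refine congrArg x.1 (Fin.ext ?_)
    simp [dIdx, sIdx]
    have := k.isLt
    split_ifs <;> omega

/-- The geometric realization (polyhedron) `|K|` of an abstract simplicial complex on
`{1, …, m}`: the set of convex weightings of the vertices whose support lies in a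
simplex of `K`, topologized as a subspace of `ℝ^m`. -/
def geomRealSC {m : ℕ} (K : AbsSimplicialComplex m) : Type :=
  {w : Fin m → ℝ // (∀ i, 0 ≤ w i) ∧ (∑ i, w i) = 1 ∧
    ∃ σ ∈ K.faces, ∀ i, w i ≠ 0 → i ∈ σ}

instance {m : ℕ} (K : AbsSimplicialComplex m) : TopologicalSpace (geomRealSC K) := by
  unfold geomRealSC; infer_instance

section Aux
variable {m : ℕ} (K : AbsSimplicialComplex m)

/-- Evaluation of a simplex at a clamped natural index. -/
def evK {L : ℕ} (x : (DeltaK K).X L) (k : ℕ) : Fin m :=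
  x.1 ⟨min k L, Nat.lt_succ_of_le (Nat.min_le_right _ _)⟩

/-- The set of repeat positions of a simplex. -/
def RsetK {L : ℕ} (x : (DeltaK K).X L) : Finset ℕ :=
  (Finset.range L).filter fun k => evK K x k = evK K x (k + 1)

/-- The admissible sequence of repeat positions, in decreasing order. -/
def JlistK {L : ℕ} (x : (DeltaK K).X L) : List ℕ :=
  ((RsetK K x).sort (· ≤ ·)).reverse

variable {K}

lemma evK_coords {L : ℕ} (x : (DeltaK K).X L) (k : Fin (L + 1)) :
    x.1 k = evK K x k.1 := by
  exact congrArg x.1 (Fin.ext (by have := k.isLt; simp [evK]; omega))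

lemma evK_s {M i : ℕ} (hi : i ≤ M) (y : (DeltaK K).X M) (k : ℕ) (hk : k ≤ M + 1) :
    evK K ((DeltaK K).s M i y) k = if k ≤ i then evK K y k else evK K y (k - 1) := by
  show y.1 (sIdx M i ⟨min k (M+1), _⟩) = _
  unfold evK
  split_ifs with h
  · exact congrArg y.1 (Fin.ext (by simp [sIdx]; split_ifs <;> omega))
  · exact congrArg y.1 (Fin.ext (by simp [sIdx]; split_ifs <;> omega))

lemma evK_d {M i : ℕ} (hi : i ≤ M + 1) (x : (DeltaK K).X (M + 1)) (k : ℕ) (hk : k ≤ M) :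
    evK K ((DeltaK K).d M i x) k = if k < i then evK K x k else evK K x (k + 1) := by
  show x.1 (dIdx M i ⟨min k M, _⟩) = _
  unfold evK
  split_ifs with h
  · exact congrArg x.1 (Fin.ext (by simp [dIdx]; split_ifs <;> omega))
  · exact congrArg x.1 (Fin.ext (by simp [dIdx]; omega))

/-- If `x` has a repeat at `i` then `x = s_i (d_i x)`. -/
lemma sd_of_rep {M i : ℕ} (hi : i ≤ M) (x : (DeltaK K).X (M + 1))
    (hrep : evK K x i = evK K x (i + 1)) :
    (DeltaK K).s M i ((DeltaK K).d M i x) = x := by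
  apply Subtype.ext; funext k
  rw [evK_coords ((DeltaK K).s M i ((DeltaK K).d M i x)) k, evK_coords x k]
  have hk : k.1 ≤ M + 1 := by omega
  rw [evK_s hi _ _ hk]
  rcases lt_trichotomy k.1 i with h | h | h
  · rw [if_pos (le_of_lt h), evK_d (by omega) _ _ (by omega), if_pos h]
  · subst h
    rw [if_pos le_rfl, evK_d (by omega) _ _ (by omega), if_neg (lt_irrefl _), ← hrep]
  · rw [if_neg (by omega), evK_d (by omega) _ _ (by omega), if_neg (by omega)]
    congr 1
    omega

lemma Rset_s {M i : ℕ} (hi : i ≤ M) (y : (DeltaK K).X M) :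
    RsetK K ((DeltaK K).s M i y)
      = insert i ((RsetK K y).image fun k => if k < i then k else k + 1) := by
  ext k
  simp only [RsetK, Finset.mem_filter, Finset.mem_range, Finset.mem_insert, Finset.mem_image]
  constructor
  · rintro ⟨hk, hrep⟩
    rcases lt_trichotomy k i with h | h | h
    · right
      refine ⟨k, ⟨⟨by omega, ?_⟩, if_pos h⟩⟩
      rwa [evK_s hi _ _ (by omega), if_pos (by omega), evK_s hi _ _ (by omega),
        if_pos (by omega)] at hrep
    · exact Or.inl h
    · right
      refine ⟨k - 1, ⟨⟨by omega, ?_⟩, by rw [if_neg (by omega)]; omega⟩⟩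
      rw [evK_s hi _ _ (by omega), if_neg (by omega), evK_s hi _ _ (by omega),
        if_neg (by omega)] at hrep
      have h1 : k + 1 - 1 = k - 1 + 1 := by omega
      rw [h1] at hrep
      exact hrep
  · rintro (rfl | ⟨a, ⟨⟨ha, harep⟩, hfa⟩⟩)
    · refine ⟨by omega, ?_⟩
      rw [evK_s hi _ _ (by omega), if_pos le_rfl, evK_s hi _ _ (by omega),
        if_neg (by omega)]
      simp
    · by_cases h : a < i
      · rw [if_pos h] at hfa; subst hfa
        refine ⟨by omega, ?_⟩
        rwa [evK_s hi _ _ (by omega), if_pos (by omega), evK_s hi _ _ (by omega),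
          if_pos (by omega)]
      · rw [if_neg h] at hfa; subst hfa
        refine ⟨by omega, ?_⟩
        rw [evK_s hi _ _ (by omega), if_neg (by omega), evK_s hi _ _ (by omega),
          if_neg (by omega)]
        simpa using harep

lemma card_Rset_s {M i : ℕ} (hi : i ≤ M) (y : (DeltaK K).X M) :
    (RsetK K ((DeltaK K).s M i y)).card = (RsetK K y).card + 1 := by
  rw [Rset_s hi y, Finset.card_insert_of_notMem, Finset.card_image_of_injOn]
  · intro a _ b _ hab
    simp only at hab
    split_ifs at hab <;> omega
  · intro hmem
    rw [Finset.mem_image] at hmem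
    obtain ⟨a, -, ha⟩ := hmem
    split_ifs at ha <;> omega

lemma Rset_cast {L L' : ℕ} (h : L = L') (x : (DeltaK K).X L) :
    RsetK K (cast (congrArg (DeltaK K).X h) x) = RsetK K x := by
  subst h; rfl

lemma Jlist_cast {L L' : ℕ} (h : L = L') (x : (DeltaK K).X L) :
    JlistK K (cast (congrArg (DeltaK K).X h) x) = JlistK K x := by
  unfold JlistK; rw [Rset_cast h]

lemma mem_Jlist {L : ℕ} (x : (DeltaK K).X L) (j : ℕ) :
    j ∈ JlistK K x ↔ j ∈ RsetK K x := by
  unfold JlistK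
  rw [List.mem_reverse, Finset.mem_sort]

lemma Jlist_sorted {L : ℕ} (x : (DeltaK K).X L) : (JlistK K x).Pairwise (· > ·) := by
  unfold JlistK
  rw [List.pairwise_reverse]
  exact (Finset.sortedLT_sort _).pairwise

lemma Jlist_length {L : ℕ} (x : (DeltaK K).X L) : (JlistK K x).length = (RsetK K x).card := by
  unfold JlistK
  rw [List.length_reverse, Finset.length_sort]

lemma Jlist_length_le {L : ℕ} (x : (DeltaK K).X L) : (JlistK K x).length ≤ L := by
  rw [Jlist_length]
  calc (RsetK K x).card ≤ (Finset.range L).card := Finset.card_filter_le _ _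
  _ = L := Finset.card_range L

lemma mem_Jlist_lt {L : ℕ} (x : (DeltaK K).X L) {j : ℕ} (hj : j ∈ JlistK K x) : j < L := by
  rw [mem_Jlist] at hj
  exact Finset.mem_range.mp (Finset.mem_filter.mp hj).1

/-- Strictly decreasing lists with the same membership are equal. -/
lemma sorted_gt_ext : ∀ (J J' : List ℕ), J.Pairwise (· > ·) → J'.Pairwise (· > ·) →
    (∀ a, a ∈ J ↔ a ∈ J') → J = J'
  | [], [], _, _, _ => rfl
  | [], j :: J', _, _, h => by simpa using (h j).mpr (List.mem_cons_self)
  | i :: J, [], _, _, h => by simpa using (h i).mp (List.mem_cons_self)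
  | i :: J, j :: J', hs, hs', h => by
    have hi : ∀ a ∈ J, a < i := fun a ha => (List.pairwise_cons.mp hs).1 a ha
    have hj : ∀ a ∈ J', a < j := fun a ha => (List.pairwise_cons.mp hs').1 a ha
    have hij : i = j := by
      have h1 := (h i).mp (List.mem_cons_self)
      have h2 := (h j).mpr (List.mem_cons_self)
      rcases List.mem_cons.mp h1 with h1 | h1
      · exact h1
      · rcases List.mem_cons.mp h2 with h2 | h2
        · exact h2.symm
        · have := hj i h1; have := hi j h2; omega
    subst hij
    have : J = J' := by
      apply sorted_gt_ext J J' (List.pairwise_cons.mp hs).2 (List.pairwise_cons.mp hs').2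
      intro a
      constructor
      · intro ha
        rcases List.mem_cons.mp ((h a).mp (List.mem_cons.mpr (Or.inr ha))) with h1 | h1
        · exact absurd (hi a ha) (by omega)
        · exact h1
      · intro ha
        rcases List.mem_cons.mp ((h a).mpr (List.mem_cons.mpr (Or.inr ha))) with h1 | h1
        · exact absurd (hj a ha) (by omega)
        · exact h1
    rw [this]

lemma valid_of_sorted_lt : ∀ (J : List ℕ) (M : ℕ), J.Pairwise (· > ·) →
    (∀ i ∈ J, i < M + J.length) → SimplicialSpace.ValidSeq J M
  | [], _, _, _ => trivial
  | i :: J', M, hs, hb => by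
    refine ⟨by have := hb i (List.mem_cons_self); simp at this ⊢; omega, ?_⟩
    apply valid_of_sorted_lt J' M (List.pairwise_cons.mp hs).2
    intro j hj
    have h1 := (List.pairwise_cons.mp hs).1 j hj
    have h2 := hb i (List.mem_cons_self)
    simp at h2
    omega

lemma card_Rset_sComp : ∀ (J : List ℕ) (M : ℕ) (y : (DeltaK K).X M),
    SimplicialSpace.ValidSeq J M →
    (RsetK K ((DeltaK K).sComp J M y)).card = J.length + (RsetK K y).card
  | [], _, _, _ => by simp [SimplicialSpace.sComp]
  | i :: J', M, y, hv => by
    show (RsetK K ((DeltaK K).s (M + J'.length) i ((DeltaK K).sComp J' M y))).card = _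
    rw [card_Rset_s hv.1, card_Rset_sComp J' M y hv.2]
    simp; omega

lemma mem_Rset_sComp : ∀ (J : List ℕ) (M : ℕ) (y : (DeltaK K).X M),
    J.Pairwise (· > ·) → SimplicialSpace.ValidSeq J M →
    ∀ j ∈ J, j ∈ RsetK K ((DeltaK K).sComp J M y)
  | [], _, _, _, _ => by simp
  | i :: J', M, y, hs, hv => by
    intro j hj
    show j ∈ RsetK K ((DeltaK K).s (M + J'.length) i ((DeltaK K).sComp J' M y))
    rw [Rset_s hv.1, Finset.mem_insert]
    rcases List.mem_cons.mp hj with rfl | hj'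
    · exact Or.inl rfl
    · right
      have hlt : j < i := (List.pairwise_cons.mp hs).1 j hj'
      have := mem_Rset_sComp J' M y (List.pairwise_cons.mp hs).2 hv.2 j hj'
      exact Finset.mem_image.mpr ⟨j, this, if_pos hlt⟩

end Aux

section Aux2
variable {m : ℕ} {K : AbsSimplicialComplex m}

lemma cast_cast_self {α β : Type u} (h1 : α = β) (h2 : β = α) (a : α) :
    cast h2 (cast h1 a) = a := by subst h1; rfl

lemma exists_sComp_eq : ∀ (J : List ℕ) (M : ℕ) (x : (DeltaK K).X (M + J.length)),
    JlistK K x = J → ∃ y : (DeltaK K).X M, (DeltaK K).sComp J M y = x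
  | [], _, x, _ => ⟨x, rfl⟩
  | i :: J', M, x, hJ => by
    have hi_mem : i ∈ RsetK K x := (mem_Jlist x i).mp (by rw [hJ]; exact List.mem_cons_self)
    have hiM : i < M + J'.length + 1 := by
      have := mem_Jlist_lt x ((mem_Jlist x i).mpr hi_mem)
      simp only [List.length_cons] at this
      omega
    have hrep : evK K x i = evK K x (i + 1) := (Finset.mem_filter.mp hi_mem).2
    have hsort : (i :: J').Pairwise (· > ·) := by rw [← hJ]; exact Jlist_sorted x
    have hmax : ∀ j ∈ RsetK K x, j ≤ i := by
      intro j hj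
      have : j ∈ i :: J' := by rw [← hJ]; exact (mem_Jlist x j).mpr hj
      rcases List.mem_cons.mp this with rfl | hj'
      · exact le_rfl
      · exact le_of_lt ((List.pairwise_cons.mp hsort).1 j hj')
    set z := (DeltaK K).d (M + J'.length) i x with hzdef
    have hsd : (DeltaK K).s (M + J'.length) i z = x :=
      sd_of_rep (show i ≤ M + J'.length by omega) x hrep
    have hRx : RsetK K x = insert i ((RsetK K z).image fun k => if k < i then k else k + 1) := by
      conv_lhs => rw [← hsd]
      exact Rset_s (show i ≤ M + J'.length by omega) z
    have hmemz : ∀ j, j ∈ RsetK K z ↔ j ∈ J' := by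
      intro j
      constructor
      · intro hjz
        have hfj : (if j < i then j else j + 1) ∈ RsetK K x := by
          rw [hRx]
          exact Finset.mem_insert.mpr (Or.inr (Finset.mem_image.mpr ⟨j, hjz, rfl⟩))
        by_cases hji : j < i
        · rw [if_pos hji] at hfj
          have : j ∈ i :: J' := by rw [← hJ]; exact (mem_Jlist x j).mpr hfj
          rcases List.mem_cons.mp this with rfl | hj'
          · omega
          · exact hj'
        · rw [if_neg hji] at hfj
          have := hmax (j + 1) hfj
          omega
      · intro hj'
        have hlt : j < i := (List.pairwise_cons.mp hsort).1 j hj'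
        have hjx : j ∈ RsetK K x := (mem_Jlist x j).mp (by rw [hJ]; exact List.mem_cons.mpr (Or.inr hj'))
        rw [hRx] at hjx
        rcases Finset.mem_insert.mp hjx with rfl | hjim
        · omega
        · obtain ⟨a, ha, hfa⟩ := Finset.mem_image.mp hjim
          by_cases hai : a < i
          · rw [if_pos hai] at hfa
            exact hfa ▸ ha
          · rw [if_neg hai] at hfa
            omega
    have hJz : JlistK K z = J' :=
      sorted_gt_ext _ _ (Jlist_sorted z) (List.pairwise_cons.mp hsort).2
        (fun a => (mem_Jlist z a).trans (hmemz a))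
    obtain ⟨y, hy⟩ := exists_sComp_eq J' M z hJz
    refine ⟨y, ?_⟩
    show (DeltaK K).s (M + J'.length) i ((DeltaK K).sComp J' M y) = x
    rw [hy]
    exact hsd

lemma mem_sImage_Jlist {L : ℕ} (x : (DeltaK K).X L) :
    x ∈ (DeltaK K).sImage (JlistK K x) L (Jlist_length_le x) := by
  have hlen := Jlist_length_le (K := K) x
  have hcast : JlistK K (cast (congrArg (DeltaK K).X (Nat.sub_add_cancel hlen).symm) x)
      = JlistK K x := Jlist_cast (Nat.sub_add_cancel hlen).symm x
  obtain ⟨y, hy⟩ := exists_sComp_eq (JlistK K x) (L - (JlistK K x).length) _ hcast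
  refine ⟨y, ?_⟩
  show cast _ ((DeltaK K).sComp (JlistK K x) (L - (JlistK K x).length) y) = x
  rw [hy]
  exact cast_cast_self _ _ x

lemma mem_filtS_one_of_rep {M : ℕ} (y : (DeltaK K).X M) (hne : (RsetK K y).Nonempty) :
    y ∈ (DeltaK K).filtS 1 M := by
  obtain ⟨k, hk⟩ := hne
  have hkM : k < M := Finset.mem_range.mp (Finset.mem_filter.mp hk).1
  have hrep : evK K y k = evK K y (k + 1) := (Finset.mem_filter.mp hk).2
  obtain ⟨M', rfl⟩ : ∃ M', M' + 1 = M := ⟨M - 1, by omega⟩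
  exact ⟨M', rfl, k, by omega, (DeltaK K).d M' k y, Set.mem_univ _,
    sd_of_rep (by omega) y hrep⟩

lemma rep_of_mem_filtS_one {M : ℕ} (y : (DeltaK K).X M) (hy : y ∈ (DeltaK K).filtS 1 M) :
    (RsetK K y).Nonempty := by
  obtain ⟨M', hm, i, hi, z, -, hz⟩ := hy
  refine ⟨i, ?_⟩
  rw [← hz, Rset_cast hm, Rset_s hi z]
  exact Finset.mem_insert_self _ _

lemma valid_Jpiece {L : ℕ} {J : List ℕ} (hJs : J.Pairwise (· > ·))
    (hJb : ∀ i ∈ J, i < L) (hlen : J.length ≤ L) :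
    SimplicialSpace.ValidSeq J (L - J.length) := by
  apply valid_of_sorted_lt _ _ hJs
  intro i hi
  have := hJb i hi
  omega

lemma card_Rset_sFromTo {L : ℕ} {J : List ℕ} (hJs : J.Pairwise (· > ·))
    (hJb : ∀ i ∈ J, i < L) (hlen : J.length ≤ L) (y : (DeltaK K).X (L - J.length)) :
    (RsetK K ((DeltaK K).sFromTo J L hlen y)).card = J.length + (RsetK K y).card := by
  show (RsetK K (cast _ _)).card = _
  rw [Rset_cast (Nat.sub_add_cancel hlen)]
  exact card_Rset_sComp J _ y (valid_Jpiece hJs hJb hlen)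

lemma not_mem_sHat_basept {L : ℕ} (x : (DeltaK K).X L) :
    x ∉ (DeltaK K).sFromTo (JlistK K x) L (Jlist_length_le x) ''
      ((DeltaK K).filtS 1 (L - (JlistK K x).length)) := by
  rintro ⟨y, hy1, hy2⟩
  have hJb : ∀ i ∈ JlistK K x, i < L := fun i hi => mem_Jlist_lt x hi
  have hcard : (RsetK K x).card = (JlistK K x).length + (RsetK K y).card := by
    have h := card_Rset_sFromTo (Jlist_sorted x) hJb (Jlist_length_le x) y
    rw [hy2] at h
    exact h
  have hne := rep_of_mem_filtS_one y hy1
  have hlen := Jlist_length (K := K) x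
  have := Finset.card_pos.mpr hne
  omega

lemma Jlist_eq_of_nondegen {L : ℕ} {J : List ℕ} (hJs : J.Pairwise (· > ·))
    (hJb : ∀ i ∈ J, i < L) (hlen : J.length ≤ L) {x : (DeltaK K).X L}
    (hx : x ∈ (DeltaK K).sImage J L hlen)
    (hnd : x ∉ (DeltaK K).sFromTo J L hlen '' ((DeltaK K).filtS 1 (L - J.length))) :
    J = JlistK K x := by
  obtain ⟨y, hy⟩ := hx
  have hv := valid_Jpiece (L := L) hJs hJb hlen
  have hsub : ∀ j ∈ J, j ∈ RsetK K x := by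
    intro j hj
    rw [← hy]
    show j ∈ RsetK K (cast _ _)
    rw [Rset_cast (Nat.sub_add_cancel hlen)]
    exact mem_Rset_sComp J _ y hJs hv j hj
  have hcard : (RsetK K x).card = J.length + (RsetK K y).card := by
    rw [← hy]
    exact card_Rset_sFromTo hJs hJb hlen y
  rcases Finset.eq_empty_or_nonempty (RsetK K y) with he | hne
  · have hnodup : J.Nodup := hJs.imp fun hab => by omega
    have htf : J.toFinset = RsetK K x := by
      apply Finset.eq_of_subset_of_card_le
      · intro j hj
        exact hsub j (List.mem_toFinset.mp hj)
      · rw [List.toFinset_card_of_nodup hnodup]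
        rw [he] at hcard
        simp at hcard
        omega
    apply sorted_gt_ext J (JlistK K x) hJs (Jlist_sorted x)
    intro a
    rw [mem_Jlist, ← htf, List.mem_toFinset]
  · exact absurd ⟨y, mem_filtS_one_of_rep y hne, hy⟩ hnd

end Aux2

section Aux3

universe w

lemma discrete_collapse {Z : Type w} [TopologicalSpace Z] [DiscreteTopology Z] (A : Set Z) :
    DiscreteTopology (Collapse A).carrier := by
  constructor
  apply eq_bot_of_singletons_open
  intro q
  exact isOpen_coinduced.mpr (isOpen_discrete _)

lemma continuous_of_discrete_prod {W Y Z : Type w} [TopologicalSpace W] [DiscreteTopology W]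
    [TopologicalSpace Y] [TopologicalSpace Z] {f : W × Y → Z}
    (h : ∀ w, Continuous fun y => f (w, y)) : Continuous f := by
  rw [continuous_iff_continuousAt]
  rintro ⟨w, y⟩
  have h1 : ContinuousAt (fun p : W × Y => f (w, p.2)) (w, y) :=
    ((h w).comp continuous_snd).continuousAt
  apply h1.congr
  apply Filter.eventuallyEq_of_mem
    (prod_mem_nhds (IsOpen.mem_nhds (isOpen_discrete ({w} : Set W)) rfl) Filter.univ_mem)
  rintro ⟨a, b⟩ ⟨ha, -⟩
  have : a = w := ha
  rw [this]

lemma collapse_mk_pt {Z : Type w} [TopologicalSpace Z] (A : Set Z) {z : Z} (hz : z ∈ A) :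
    Collapse.mk A z = (Collapse A).pt :=
  Quotient.sound (Or.inr ⟨hz, trivial⟩)

lemma susp_mk_zero (P : PSpace.{w}) (z : P.carrier) : Susp.mk P z 0 = (Susp P).pt :=
  Quotient.sound (Or.inr ⟨Or.inl rfl, trivial⟩)

lemma susp_mk_one (P : PSpace.{w}) (z : P.carrier) : Susp.mk P z 1 = (Susp P).pt :=
  Quotient.sound (Or.inr ⟨Or.inr (Or.inl rfl), trivial⟩)

lemma susp_mk_pt (P : PSpace.{w}) (t : unitInterval) : Susp.mk P P.pt t = (Susp P).pt :=
  Quotient.sound (Or.inr ⟨Or.inr (Or.inr rfl), trivial⟩)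

lemma wedge_mk_pt {ι : Type v} (P : ι → PSpace.{w}) (i : ι) :
    Wedge.mk P i (P i).pt = (Wedge P).pt :=
  Quotient.sound (Or.inr ⟨rfl, trivial⟩)

variable {m : ℕ} (K : AbsSimplicialComplex m) (n : ℕ)

/-- The index type of the wedge. -/
abbrev IdxT : Type := Σ r : Fin (n + 1), AdmSeq ↑r n

lemma plen (p : IdxT n) : p.2.val.length ≤ n := by
  rw [p.2.property.1]; exact Nat.lt_succ_iff.mp p.1.isLt

/-- Domain of the splitting map. -/
abbrev ASp : PSpace.{0} := Susp (plusP ((DeltaK K).X n))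

/-- The wedge summands. -/
abbrev BP (p : IdxT n) : PSpace.{0} := Susp ((DeltaK K).sHat p.2.val n (plen n p))

/-- Codomain of the splitting map. -/
abbrev BSp : PSpace.{0} := Wedge (BP K n)

/-- The index of a simplex in the wedge. -/
def pIdx (x : (DeltaK K).X n) : IdxT n :=
  ⟨⟨(JlistK K x).length, Nat.lt_succ_of_le (Jlist_length_le x)⟩,
   ⟨JlistK K x, rfl, Jlist_sorted x, fun i hi => mem_Jlist_lt x hi⟩⟩

/-- The basic forward map. -/
def Hin (x : (DeltaK K).X n) (t : unitInterval) : (BSp K n).carrier :=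
  Wedge.mk (BP K n) (pIdx K n x)
    (Susp.mk ((DeltaK K).sHat (JlistK K x) n (plen n (pIdx K n x)))
      (Collapse.mk _ (⟨x, mem_sImage_Jlist x⟩ :
        ↥((DeltaK K).sImage (JlistK K x) n (plen n (pIdx K n x))))) t)

/-- Forward map on the plus construction. -/
def Hplus : (plusP ((DeltaK K).X n)).carrier → unitInterval → (BSp K n).carrier :=
  Quotient.lift (Sum.elim (fun x t => Hin K n x t) (fun _ _ => (BSp K n).pt)) (by
    rintro a b (rfl | ⟨ha, hb⟩)
    · rfl
    · have key : ∀ c, collapseGood (∅ : Set ((DeltaK K).X n)) c →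
          Sum.elim (fun x t => Hin K n x t) (fun _ _ => (BSp K n).pt) c
            = fun _ => (BSp K n).pt := by
        rintro (x | ⟨⟩) hc
        · exact absurd hc (Set.notMem_empty x)
        · rfl
      rw [key a ha, key b hb])

lemma Hplus_pt (t : unitInterval) :
    Hplus K n (plusP ((DeltaK K).X n)).pt t = (BSp K n).pt := rfl

lemma Hplus_zero (z : (plusP ((DeltaK K).X n)).carrier) :
    Hplus K n z 0 = (BSp K n).pt := by
  refine Quotient.inductionOn z ?_
  rintro (x | ⟨⟩)
  · show Hin K n x 0 = (BSp K n).pt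
    unfold Hin
    refine (congrArg (Wedge.mk (BP K n) (pIdx K n x)) (susp_mk_zero _ _)).trans ?_
    exact wedge_mk_pt _ _
  · rfl

lemma Hplus_one (z : (plusP ((DeltaK K).X n)).carrier) :
    Hplus K n z 1 = (BSp K n).pt := by
  refine Quotient.inductionOn z ?_
  rintro (x | ⟨⟩)
  · show Hin K n x 1 = (BSp K n).pt
    unfold Hin
    refine (congrArg (Wedge.mk (BP K n) (pIdx K n x)) (susp_mk_one _ _)).trans ?_
    exact wedge_mk_pt _ _
  · rfl

/-- The forward map. -/
def Hfun : (ASp K n).carrier → (BSp K n).carrier :=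
  Quotient.lift
    (Sum.elim (fun q : (plusP ((DeltaK K).X n)).carrier × unitInterval => Hplus K n q.1 q.2)
      (fun _ => (BSp K n).pt)) (by
    have key : ∀ c, collapseGood {q : (plusP ((DeltaK K).X n)).carrier × unitInterval |
          q.2 = 0 ∨ q.2 = 1 ∨ q.1 = (plusP ((DeltaK K).X n)).pt} c →
        Sum.elim (fun q : (plusP ((DeltaK K).X n)).carrier × unitInterval =>
          Hplus K n q.1 q.2) (fun _ => (BSp K n).pt) c = (BSp K n).pt := by
      rintro (⟨z, t⟩ | ⟨⟩) hc
      · rcases hc with h0 | h1 | hpt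
        · show Hplus K n z t = _
          rw [show t = 0 from h0]
          exact Hplus_zero K n z
        · show Hplus K n z t = _
          rw [show t = 1 from h1]
          exact Hplus_one K n z
        · show Hplus K n z t = _
          rw [show z = _ from hpt]
          exact Hplus_pt K n t
      · rfl
    rintro a b (rfl | ⟨ha, hb⟩)
    · rfl
    · rw [key a ha, key b hb])

open Classical in
/-- The basic backward map. -/
noncomputable def Gin (p : IdxT n) :
    (↥((DeltaK K).sImage p.2.val n (plen n p)) ⊕ Unit) → unitInterval → (ASp K n).carrier :=
  Sum.elim
    (fun xs t =>
      if (xs : (DeltaK K).X n) ∈ (DeltaK K).sFromTo p.2.val n (plen n p) ''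
          ((DeltaK K).filtS 1 (n - p.2.val.length)) then (ASp K n).pt
      else Susp.mk (plusP ((DeltaK K).X n)) (Collapse.mk ∅ (xs : (DeltaK K).X n)) t)
    (fun _ _ => (ASp K n).pt)

lemma Gin_pos (p : IdxT n) (xs : ↥((DeltaK K).sImage p.2.val n (plen n p))) (t : unitInterval)
    (hc : (xs : (DeltaK K).X n) ∈ (DeltaK K).sFromTo p.2.val n (plen n p) ''
      ((DeltaK K).filtS 1 (n - p.2.val.length))) :
    Gin K n p (Sum.inl xs) t = (ASp K n).pt := by
  unfold Gin
  exact if_pos hc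

lemma Gin_neg (p : IdxT n) (xs : ↥((DeltaK K).sImage p.2.val n (plen n p))) (t : unitInterval)
    (hc : (xs : (DeltaK K).X n) ∉ (DeltaK K).sFromTo p.2.val n (plen n p) ''
      ((DeltaK K).filtS 1 (n - p.2.val.length))) :
    Gin K n p (Sum.inl xs) t
      = Susp.mk (plusP ((DeltaK K).X n)) (Collapse.mk ∅ (xs : (DeltaK K).X n)) t := by
  unfold Gin
  exact if_neg hc

/-- Backward map on the sHat quotient. -/
noncomputable def GsHat (p : IdxT n) :
    ((DeltaK K).sHat p.2.val n (plen n p)).carrier → unitInterval → (ASp K n).carrier :=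
  Quotient.lift (Gin K n p) (by
    have key : ∀ c, collapseGood {x : ↥((DeltaK K).sImage p.2.val n (plen n p)) |
          (x : (DeltaK K).X n) ∈ (DeltaK K).sFromTo p.2.val n (plen n p) ''
            ((DeltaK K).filtS 1 (n - p.2.val.length))} c →
        Gin K n p c = fun _ => (ASp K n).pt := by
      rintro (xs | ⟨⟩) hc
      · funext t
        exact Gin_pos K n p xs t hc
      · rfl
    rintro a b (rfl | ⟨ha, hb⟩)
    · rfl
    · rw [key a ha, key b hb])

lemma GsHat_zero (p : IdxT n) (w : ((DeltaK K).sHat p.2.val n (plen n p)).carrier) :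
    GsHat K n p w 0 = (ASp K n).pt := by
  refine Quotient.inductionOn w ?_
  rintro (xs | ⟨⟩)
  · show Gin K n p (Sum.inl xs) 0 = _
    by_cases hc : (xs : (DeltaK K).X n) ∈ (DeltaK K).sFromTo p.2.val n (plen n p) ''
        ((DeltaK K).filtS 1 (n - p.2.val.length))
    · exact Gin_pos K n p xs 0 hc
    · rw [Gin_neg K n p xs 0 hc]
      exact susp_mk_zero _ _
  · rfl

lemma GsHat_one (p : IdxT n) (w : ((DeltaK K).sHat p.2.val n (plen n p)).carrier) :
    GsHat K n p w 1 = (ASp K n).pt := by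
  refine Quotient.inductionOn w ?_
  rintro (xs | ⟨⟩)
  · show Gin K n p (Sum.inl xs) 1 = _
    by_cases hc : (xs : (DeltaK K).X n) ∈ (DeltaK K).sFromTo p.2.val n (plen n p) ''
        ((DeltaK K).filtS 1 (n - p.2.val.length))
    · exact Gin_pos K n p xs 1 hc
    · rw [Gin_neg K n p xs 1 hc]
      exact susp_mk_one _ _
  · rfl

/-- Backward map on each suspension summand. -/
noncomputable def GSusp (p : IdxT n) : (BP K n p).carrier → (ASp K n).carrier :=
  Quotient.lift
    (Sum.elim (fun q : ((DeltaK K).sHat p.2.val n (plen n p)).carrier × unitInterval =>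
      GsHat K n p q.1 q.2) (fun _ => (ASp K n).pt)) (by
    have key : ∀ c, collapseGood {q : ((DeltaK K).sHat p.2.val n (plen n p)).carrier ×
          unitInterval | q.2 = 0 ∨ q.2 = 1 ∨
          q.1 = ((DeltaK K).sHat p.2.val n (plen n p)).pt} c →
        Sum.elim (fun q : ((DeltaK K).sHat p.2.val n (plen n p)).carrier × unitInterval =>
          GsHat K n p q.1 q.2) (fun _ => (ASp K n).pt) c = (ASp K n).pt := by
      rintro (⟨w, t⟩ | ⟨⟩) hc
      · rcases hc with h0 | h1 | hpt
        · show GsHat K n p w t = _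
          rw [show t = 0 from h0]
          exact GsHat_zero K n p w
        · show GsHat K n p w t = _
          rw [show t = 1 from h1]
          exact GsHat_one K n p w
        · show GsHat K n p w t = _
          rw [show w = _ from hpt]
          rfl
      · rfl
    rintro a b (rfl | ⟨ha, hb⟩)
    · rfl
    · rw [key a ha, key b hb])

/-- The backward map. -/
noncomputable def Gfun : (BSp K n).carrier → (ASp K n).carrier :=
  Quotient.lift
    (Sum.elim (fun s : Σ p : IdxT n, (BP K n p).carrier => GSusp K n s.1 s.2)
      (fun _ => (ASp K n).pt)) (by
    have key : ∀ c, collapseGood {x : Σ p : IdxT n, (BP K n p).carrier |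
          x.2 = (BP K n x.1).pt} c →
        Sum.elim (fun s : Σ p : IdxT n, (BP K n p).carrier => GSusp K n s.1 s.2)
          (fun _ => (ASp K n).pt) c = (ASp K n).pt := by
      rintro (⟨p, q⟩ | ⟨⟩) hc
      · show GSusp K n p q = _
        rw [show q = _ from hc]
        rfl
      · rfl
    rintro a b (rfl | ⟨ha, hb⟩)
    · rfl
    · rw [key a ha, key b hb])

end Aux3

section Aux4

lemma homotopic_of_eq {A : Type u} {B : Type v} [TopologicalSpace A] [TopologicalSpace B]
    {f g : C(A, B)} (h : ∀ x, f x = g x) : f.Homotopic g := by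
  have he : f = g := ContinuousMap.ext h
  subst he
  exact ContinuousMap.Homotopic.refl f

variable {m : ℕ} (K : AbsSimplicialComplex m) (n : ℕ)

lemma cont_Hfun : Continuous (Hfun K n) := by
  haveI hd : DiscreteTopology ((DeltaK K).X n) := ⟨rfl⟩
  haveI : DiscreteTopology (plusP ((DeltaK K).X n)).carrier := discrete_collapse _
  apply Continuous.quotient_lift
  apply Continuous.sumElim
  · apply continuous_of_discrete_prod
    intro z
    refine Quotient.inductionOn z ?_
    rintro (x | ⟨⟩)
    · show Continuous fun t => Hin K n x t
      exact continuous_quotient_mk'.comp (continuous_inl.comp (continuous_sigmaMk.comp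
        (continuous_quotient_mk'.comp (continuous_inl.comp
          (continuous_const.prodMk continuous_id)))))
    · exact continuous_const
  · exact continuous_const

lemma cont_Gfun : Continuous (Gfun K n) := by
  haveI hd : DiscreteTopology ((DeltaK K).X n) := ⟨rfl⟩
  apply Continuous.quotient_lift
  apply Continuous.sumElim
  · apply continuous_sigma
    intro p
    show Continuous fun q => GSusp K n p q
    apply Continuous.quotient_lift
    apply Continuous.sumElim
    · haveI : DiscreteTopology ((DeltaK K).sHat p.2.val n (plen n p)).carrier :=
        discrete_collapse _
      apply continuous_of_discrete_prod
      intro w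
      refine Quotient.inductionOn w ?_
      rintro (xs | ⟨⟩)
      · show Continuous fun t => Gin K n p (Sum.inl xs) t
        by_cases hc : (xs : (DeltaK K).X n) ∈ (DeltaK K).sFromTo p.2.val n (plen n p) ''
            ((DeltaK K).filtS 1 (n - p.2.val.length))
        · have he : (fun t => Gin K n p (Sum.inl xs) t) = fun _ => (ASp K n).pt :=
            funext fun t => Gin_pos K n p xs t hc
          rw [he]
          exact continuous_const
        · have he : (fun t => Gin K n p (Sum.inl xs) t) = fun t =>
              Susp.mk (plusP ((DeltaK K).X n)) (Collapse.mk ∅ (xs : (DeltaK K).X n)) t :=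
            funext fun t => Gin_neg K n p xs t hc
          rw [he]
          exact continuous_quotient_mk'.comp (continuous_inl.comp
            (continuous_const.prodMk continuous_id))
      · exact continuous_const
    · exact continuous_const
  · exact continuous_const

lemma eq_GH : ∀ a : (ASp K n).carrier, Gfun K n (Hfun K n a) = a := by
  intro a
  refine Quotient.inductionOn a ?_
  rintro (⟨z, t⟩ | ⟨⟩)
  · refine Quotient.inductionOn z ?_
    rintro (x | ⟨⟩)
    · exact Gin_neg K n (pIdx K n x) ⟨x, mem_sImage_Jlist x⟩ t (not_mem_sHat_basept x)
    · exact (Quotient.sound (Or.inr ⟨Or.inr (Or.inr rfl), trivial⟩)).symm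
  · rfl

lemma eq_HG : ∀ b : (BSp K n).carrier, Hfun K n (Gfun K n b) = b := by
  intro b
  refine Quotient.inductionOn b ?_
  rintro (⟨p, q⟩ | ⟨⟩)
  · refine Quotient.inductionOn q ?_
    rintro (⟨w, t⟩ | ⟨⟩)
    · refine Quotient.inductionOn w ?_
      rintro (⟨x, hx⟩ | ⟨⟩)
      · by_cases hc : x ∈ (DeltaK K).sFromTo p.2.val n (plen n p) ''
            ((DeltaK K).filtS 1 (n - p.2.val.length))
        · have h1 : Hfun K n (Gin K n p (Sum.inl ⟨x, hx⟩) t) = (BSp K n).pt := by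
            rw [Gin_pos K n p ⟨x, hx⟩ t hc]
            rfl
          refine h1.trans ?_
          have hq : Susp.mk ((DeltaK K).sHat p.2.val n (plen n p))
              (Collapse.mk _ (⟨x, hx⟩ : ↥((DeltaK K).sImage p.2.val n (plen n p)))) t
              = (BP K n p).pt := by
            rw [collapse_mk_pt {y : ↥((DeltaK K).sImage p.2.val n (plen n p)) |
              (y : (DeltaK K).X n) ∈ (DeltaK K).sFromTo p.2.val n (plen n p) ''
                ((DeltaK K).filtS 1 (n - p.2.val.length))} hc]
            exact susp_mk_pt _ t
          exact (Quotient.sound (Or.inr ⟨hq, trivial⟩)).symm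
        · have h1 : Hfun K n (Gin K n p (Sum.inl ⟨x, hx⟩) t) = Hin K n x t := by
            rw [Gin_neg K n p ⟨x, hx⟩ t hc]
            rfl
          refine h1.trans ?_
          obtain ⟨⟨r, hr⟩, Jv, hJ1, hJ2, hJ3⟩ := p
          have hJ : Jv = JlistK K x :=
            Jlist_eq_of_nondegen hJ2 hJ3
              (by rw [hJ1]; exact Nat.lt_succ_iff.mp hr) hx hc
          subst hJ
          obtain rfl : r = (JlistK K x).length := hJ1.symm
          rfl
      · exact (Quotient.sound (Or.inr ⟨susp_mk_pt _ t, trivial⟩)).symm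
    · exact (Quotient.sound (Or.inr ⟨rfl, trivial⟩)).symm
  · rfl

end Aux4

/-- Let `K` be an abstract simplicial complex on `[m]`, and regard
`Δ(K)` as a simplicial space with each `Δ(K)_n` discrete.  Then for each `n ≥ 0` the
suspension of `Δ(K)_n` splits: there is a homotopy equivalence
`Σ(Δ(K)_n) → ⋁_{0 ≤ r ≤ n} ⋁_J Σ(ŝ_J(Δ(K)_{n−r}))`, where `J` ranges over all
admissible sequences with `|J| = r`. -/
theorem DeltaK_suspension_splitting {m : ℕ} (K : AbsSimplicialComplex m) (n : ℕ) :
    ∃ H : C((Susp (plusP ((DeltaK K).X n))).carrier,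
        (Wedge fun p : Σ r : Fin (n + 1), AdmSeq ↑r n =>
          Susp ((DeltaK K).sHat p.2.val n
            (by rw [p.2.property.1]; exact Nat.lt_succ_iff.mp p.1.isLt))).carrier),
      IsHtpyEquiv H := by
  refine ⟨⟨Hfun K n, cont_Hfun K n⟩, ⟨⟨Gfun K n, cont_Gfun K n⟩, ?_, ?_⟩⟩
  · exact homotopic_of_eq (eq_GH K n)
  · exact homotopic_of_eq (eq_HG K n)
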